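/- Suppose q > 0, r > 1, and for each positive integer n, |Qⁿ₁₁| ≤ q/nʳ. Let γ > 0 and define Pⁿ₁₂ = (-n²π² + √(n⁴π⁴ + γ²Qⁿ₁₁/(n²π²)))/γ². Then the series Σₙ Pⁿ₁₂ converges absolutely; in particular the double sine series Σₙ Pⁿ₁₂ sin(nπx₁) sin(nπx₂) converges uniformly on [0,1]². -/

import Mathlib

open Real Filter

lemma aux_sqrt_sub (a b : ℝ) (ha : 0 ≤ a) :
    |Real.sqrt (a ^ 2 + b) - a| ≤ Real.sqrt |b| := by
  have hsb : 0 ≤ Real.sqrt |b| := Real.sqrt_nonneg _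
  have hsq : Real.sqrt |b| ^ 2 = |b| := Real.sq_sqrt (abs_nonneg b)
  rw [abs_sub_le_iff]
  constructor
  · have h1 : a ^ 2 + b ≤ (a + Real.sqrt |b|) ^ 2 := by nlinarith [le_abs_self b]
    have h2 : Real.sqrt (a ^ 2 + b) ≤ a + Real.sqrt |b| := by
      calc Real.sqrt (a ^ 2 + b) ≤ Real.sqrt ((a + Real.sqrt |b|) ^ 2) :=
            Real.sqrt_le_sqrt h1
        _ = a + Real.sqrt |b| := Real.sqrt_sq (by positivity)
    linarith
  · rcases le_or_gt a (Real.sqrt |b|) with h | h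
    · have := Real.sqrt_nonneg (a ^ 2 + b); linarith
    · have h2 : (a - Real.sqrt |b|) ^ 2 ≤ a ^ 2 + b := by
        nlinarith [neg_abs_le b, mul_le_mul_of_nonneg_left h.le hsb]
      have h3 : a - Real.sqrt |b| ≤ Real.sqrt (a ^ 2 + b) := by
        calc a - Real.sqrt |b| = Real.sqrt ((a - Real.sqrt |b|) ^ 2) :=
              (Real.sqrt_sq (by linarith)).symm
          _ ≤ Real.sqrt (a ^ 2 + b) := Real.sqrt_le_sqrt h2
      linarith

theorem stmt5 (q r : ℝ) (hq : 0 < q) (hr : 1 < r) (γ : ℝ) (hγ : 0 < γ)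
    (Q11 : ℕ → ℝ) (hQ : ∀ n : ℕ, 0 < n → |Q11 n| ≤ q / (n : ℝ) ^ r)
    (P12 : ℕ → ℝ)
    (hP : ∀ n : ℕ, 0 < n → P12 n = (-(n : ℝ)^2 * π^2 +
      Real.sqrt ((n : ℝ)^4 * π^4 + γ^2 * Q11 n / ((n : ℝ)^2 * π^2))) / γ^2) :
    Summable (fun n : ℕ => |P12 (n + 1)|) ∧
    TendstoUniformlyOn
      (fun (N : ℕ) (x : ℝ × ℝ) => ∑ n ∈ Finset.range N,
        P12 (n + 1) * Real.sin ((n + 1) * π * x.1) * Real.sin ((n + 1) * π * x.2))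
      (fun x : ℝ × ℝ => ∑' n : ℕ,
        P12 (n + 1) * Real.sin ((n + 1) * π * x.1) * Real.sin ((n + 1) * π * x.2))
      atTop (Set.Icc 0 1 ×ˢ Set.Icc 0 1) := by
  have hπ := Real.pi_pos
  set s : ℝ := (r + 2) / 2 with hs_def
  have hs : 1 < s := by rw [hs_def]; linarith
  have key : ∀ n : ℕ, 0 < n →
      |P12 n| ≤ (Real.sqrt q / (γ * π)) * ((n : ℝ) ^ s)⁻¹ := by
    intro n hn
    have hn' : (0 : ℝ) < n := by exact_mod_cast hn
    rw [hP n hn]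
    set a : ℝ := (n : ℝ) ^ 2 * π ^ 2 with ha_def
    set b : ℝ := γ ^ 2 * Q11 n / ((n : ℝ) ^ 2 * π ^ 2) with hb_def
    have ha : 0 < a := by positivity
    have hA : (n : ℝ) ^ 4 * π ^ 4 = a ^ 2 := by rw [ha_def]; ring
    rw [hA, show -(n:ℝ) ^ 2 * π ^ 2 = -a from by rw [ha_def]; ring]
    have h1 : |(-a + Real.sqrt (a ^ 2 + b)) / γ ^ 2|
        = |Real.sqrt (a ^ 2 + b) - a| / γ ^ 2 := by
      rw [abs_div, abs_of_nonneg (by positivity : (0:ℝ) ≤ γ ^ 2)]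
      ring_nf
    rw [h1]
    have h2 : |Real.sqrt (a ^ 2 + b) - a| ≤ Real.sqrt |b| := aux_sqrt_sub a b ha.le
    set T : ℝ := γ * Real.sqrt q / π * ((n : ℝ) ^ s)⁻¹ with hT_def
    have hT : 0 ≤ T := by positivity
    have hns : (0:ℝ) < (n : ℝ) ^ s := Real.rpow_pos_of_pos hn' _
    have hnr : (0:ℝ) < (n : ℝ) ^ r := Real.rpow_pos_of_pos hn' _
    have hT2 : T ^ 2 = γ ^ 2 * (q / (n : ℝ) ^ r) / ((n : ℝ) ^ 2 * π ^ 2) := by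
      have e1 : ((n : ℝ) ^ s) ^ 2 = (n : ℝ) ^ r * (n : ℝ) ^ (2:ℕ) := by
        rw [← Real.rpow_natCast ((n : ℝ) ^ s) 2, ← Real.rpow_mul hn'.le]
        rw [show s * (2:ℕ) = r + 2 by rw [hs_def]; push_cast; ring]
        rw [Real.rpow_add hn', Real.rpow_two]
      have e2 : Real.sqrt q ^ 2 = q := Real.sq_sqrt hq.le
      rw [hT_def]
      field_simp
      rw [e2, e1]
      ring
    have h3 : |b| ≤ T ^ 2 := by
      rw [hT2, hb_def, abs_div, abs_of_nonneg (by positivity : (0:ℝ) ≤ (n:ℝ)^2 * π^2),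
        abs_mul, abs_of_nonneg (by positivity : (0:ℝ) ≤ γ ^ 2)]
      gcongr
      exact hQ n hn
    have h4 : Real.sqrt |b| ≤ T := by
      calc Real.sqrt |b| ≤ Real.sqrt (T ^ 2) := Real.sqrt_le_sqrt h3
        _ = T := Real.sqrt_sq hT
    have h5 : |Real.sqrt (a ^ 2 + b) - a| / γ ^ 2 ≤ T / γ ^ 2 := by
      gcongr
      linarith
    have h6 : T / γ ^ 2 = (Real.sqrt q / (γ * π)) * ((n : ℝ) ^ s)⁻¹ := by
      rw [hT_def]; field_simp
    linarith [h5, h6 ▸ h5]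
  have hsum0 : Summable (fun n : ℕ => (((n : ℝ)) ^ s)⁻¹) :=
    Real.summable_nat_rpow_inv.mpr hs
  have hsum1 : Summable (fun n : ℕ =>
      (Real.sqrt q / (γ * π)) * (((n + 1 : ℕ) : ℝ) ^ s)⁻¹) :=
    (((summable_nat_add_iff 1).mpr hsum0).mul_left _)
  have h1 : Summable (fun n : ℕ => |P12 (n + 1)|) := by
    apply hsum1.of_nonneg_of_le (fun n => abs_nonneg _)
    intro n
    exact_mod_cast key (n + 1) (Nat.succ_pos n)
  refine ⟨h1, ?_⟩
  apply tendstoUniformlyOn_tsum_nat h1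
  intro n x hx
  have hs1 : |Real.sin ((n + 1) * π * x.1)| ≤ 1 := Real.abs_sin_le_one _
  have hs2 : |Real.sin ((n + 1) * π * x.2)| ≤ 1 := Real.abs_sin_le_one _
  have : ‖P12 (n + 1) * Real.sin ((n + 1) * π * x.1) * Real.sin ((n + 1) * π * x.2)‖
      = |P12 (n + 1)| * |Real.sin ((n + 1) * π * x.1)| * |Real.sin ((n + 1) * π * x.2)| := by
    rw [Real.norm_eq_abs, abs_mul, abs_mul]
  rw [this]
  calc |P12 (n + 1)| * |Real.sin ((n + 1) * π * x.1)| * |Real.sin ((n + 1) * π * x.2)|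
      ≤ |P12 (n + 1)| * 1 * 1 := by
        gcongr
    _ = |P12 (n + 1)| := by ring
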